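/- Let X be a δ-hyperbolic geodesic metric space and f : ℝ_{≥0} → ℝ_{≥0} a subexponential monotonic increasing function. Then there exists a constant K = K(f, δ) such that every f-quasi-geodesic in X is a K-quasi-geodesic. -/
import Mathlib

set_option maxHeartbeats 1000000

open Filter

lemma gp_ineq {X : Type*} [MetricSpace X] {δ' : ℝ}
    (hhyp' : ∀ x y z w : X,
      dist x y + dist z w ≤ max (dist x z + dist y w) (dist x w + dist y z) + 2 * δ')
    (x y z w : X) :
    min (dist w x + dist w y - dist x y) (dist w y + dist w z - dist y z) - 2*δ'
      ≤ dist w x + dist w z - dist x z := by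
  have h := hhyp' x z y w
  rcases le_total (dist x y + dist z w) (dist x w + dist z y) with hc | hc
  · rw [max_eq_right hc] at h
    have h2 := min_le_right (dist w x + dist w y - dist x y) (dist w y + dist w z - dist y z)
    have e1 := dist_comm w x
    have e2 := dist_comm w y
    have e3 := dist_comm w z
    have e4 := dist_comm z y
    linarith
  · rw [max_eq_left hc] at h
    have h2 := min_le_left (dist w x + dist w y - dist x y) (dist w y + dist w z - dist y z)
    have e1 := dist_comm w y
    have e2 := dist_comm z w
    linarith

lemma chain_lemma {X : Type*} [MetricSpace X] {δ' : ℝ}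
    (hgp : ∀ x y z w : X,
      min (dist w x + dist w y - dist x y) (dist w y + dist w z - dist y z) - 2*δ'
        ≤ dist w x + dist w z - dist x z)
    (w : X) (c : ℝ → X) (D : ℝ) :
    ∀ n : ℕ, ∀ a b : ℝ, a ≤ b →
    (∀ s t : ℝ, a ≤ s → s ≤ t → t ≤ b → dist (c s) (c t) ≤ t - s) →
    (∀ r : ℝ, a ≤ r → r ≤ b → D ≤ dist w (c r)) →
    2*D - 2*n*δ' - (b-a)/2^n ≤ dist w (c a) + dist w (c b) - dist (c a) (c b) := by
  intro n
  induction n with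
  | zero =>
    intro a b hab hlip hD
    have h1 := hlip a b le_rfl hab le_rfl
    have h2 := hD a le_rfl hab
    have h3 := hD b hab le_rfl
    simp only [Nat.cast_zero, pow_zero]
    linarith
  | succ n ih =>
    intro a b hab hlip hD
    set m := (a+b)/2 with hm
    have ham : a ≤ m := by simp only [hm]; linarith
    have hmb : m ≤ b := by simp only [hm]; linarith
    have h1 := ih a m ham (fun s t hs hst ht => hlip s t hs hst (ht.trans hmb))
      (fun r hr hr' => hD r hr (hr'.trans hmb))
    have h2 := ih m b hmb (fun s t hs hst ht => hlip s t (ham.trans hs) hst ht)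
      (fun r hr hr' => hD r (ham.trans hr) hr')
    have h3 := hgp (c a) (c m) (c b) w
    have hm1 : m - a = (b-a)/2 := by simp only [hm]; ring
    have hm2 : b - m = (b-a)/2 := by simp only [hm]; ring
    rw [hm1] at h1
    rw [hm2] at h2
    have e : (b-a)/2/2^n = (b-a)/2^(n+1) := by rw [pow_succ]; ring
    rw [e] at h1 h2
    have hfin : 2*D - 2*(n:ℝ)*δ' - (b-a)/2^(n+1)
        ≤ min (dist w (c a) + dist w (c m) - dist (c a) (c m))
              (dist w (c m) + dist w (c b) - dist (c m) (c b)) :=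
      le_min (by linarith) (by linarith)
    push_cast
    linarith

/-- Let `X` be a `δ`-hyperbolic geodesic metric space (four-point
condition) and `f` a monotone, nonnegative, subexponential function. Then there is a
constant `K = K(f, δ)` such that every path parametrised by arc length satisfying the
`f`-quasi-geodesic condition is a `K`-quasi-geodesic. -/
theorem stmt4 {X : Type*} [MetricSpace X] (δ : ℝ) (hδ : 0 ≤ δ)
    (hhyp : ∀ x y z w : X,
      dist x y + dist z w ≤ max (dist x z + dist y w) (dist x w + dist y z) + 2 * δ)
    (hgeo : ∀ x y : X, ∃ g : ℝ → X, g 0 = x ∧ g (dist x y) = y ∧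
      ∀ s ∈ Set.Icc (0 : ℝ) (dist x y), ∀ t ∈ Set.Icc (0 : ℝ) (dist x y),
        dist (g s) (g t) = |s - t|)
    (f : ℝ → ℝ) (hmono : Monotone f) (hpos : ∀ t, 0 ≤ f t)
    (hsub : ∀ ε : ℝ, 0 < ε →
      Tendsto (fun t => f t / Real.exp (ε * t)) atTop (nhds 0)) :
    ∃ K : ℝ, ∀ (L : ℝ) (c : ℝ → X), 0 ≤ L →
      (∀ p ∈ Set.Icc 0 L, ∀ q ∈ Set.Icc 0 L, dist (c p) (c q) ≤ |p - q|) →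
      (∀ p q : ℝ, 0 ≤ p → p ≤ q → q ≤ L →
        q - p ≤ f (dist (c p) (c q)) * dist (c p) (c q) + f (dist (c p) (c q))) →
      (∀ p q : ℝ, 0 ≤ p → p ≤ q → q ≤ L →
        q - p ≤ K * dist (c p) (c q) + K) := by
  classical
  -- normalize the hyperbolicity constant
  set δ' : ℝ := max δ 1 with hδ'def
  have hδ'1 : (1:ℝ) ≤ δ' := le_max_right _ _
  have hδ'0 : (0:ℝ) < δ' := lt_of_lt_of_le one_pos hδ'1
  have hhyp' : ∀ x y z w : X,
      dist x y + dist z w ≤ max (dist x z + dist y w) (dist x w + dist y z) + 2 * δ' := by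
    intro x y z w
    have h := hhyp x y z w
    have : δ ≤ δ' := le_max_left _ _
    linarith
  have hgp := gp_ineq hhyp'
  -- subexponential control
  have hlog2 : (0:ℝ) < Real.log 2 := Real.log_pos one_lt_two
  set ε : ℝ := Real.log 2 / (8*δ') with hεdef
  have hε : 0 < ε := div_pos hlog2 (by linarith)
  have hev : ∀ᶠ t in atTop, f t / Real.exp (ε * t) < 1 :=
    (hsub ε hε).eventually (gt_mem_nhds one_pos)
  obtain ⟨T₀, hT₀⟩ := eventually_atTop.mp hev
  set A : ℝ := max (f (max T₀ 0)) 1 with hAdef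
  have hA1 : (1:ℝ) ≤ A := le_max_right _ _
  have hfA : ∀ t : ℝ, 0 ≤ t → f t ≤ A * Real.exp (ε*t) := by
    intro t ht
    have hexp1 : (1:ℝ) ≤ Real.exp (ε*t) := Real.one_le_exp (by positivity)
    rcases le_total t (max T₀ 0) with h | h
    · have h1 : f t ≤ A := (hmono h).trans (le_max_left _ _)
      nlinarith
    · have h2 := hT₀ t ((le_max_left T₀ 0).trans h)
      have h3 : f t ≤ Real.exp (ε*t) := by
        have := (div_lt_one (Real.exp_pos _)).mp h2
        linarith
      nlinarith
  set C₁ : ℝ := 8*A*Real.exp ε/ε with hC₁def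
  have hC₁1 : (1:ℝ) ≤ C₁ := by
    rw [hC₁def, le_div_iff₀ hε]
    have h1 : ε ≤ 1 := by
      have := Real.log_le_sub_one_of_pos (by norm_num : (0:ℝ) < 2)
      rw [hεdef]
      rw [div_le_one (by linarith)]
      nlinarith
    nlinarith [Real.one_le_exp hε.le]
  have hC₁0 : (0:ℝ) < C₁ := lt_of_lt_of_le one_pos hC₁1
  set D₀ : ℝ := 8*δ'*Real.log C₁/Real.log 2 + 24*δ' + 4 with hD₀def
  have hD₀0 : 0 ≤ D₀ := by
    have := Real.log_nonneg hC₁1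
    have : 0 ≤ 8*δ'*Real.log C₁/Real.log 2 := by positivity
    rw [hD₀def]; linarith
  set M : ℝ := f (2*D₀+1) * (2*D₀+1) + f (2*D₀+1) with hMdef
  have hM0 : 0 ≤ M := by
    have := hpos (2*D₀+1)
    rw [hMdef]; nlinarith
  refine ⟨max M (f 0), ?_⟩
  intro L c hL hlip hf p q hp hpq hqL
  have hKM : M ≤ max M (f 0) := le_max_left _ _
  have hKf0 : f 0 ≤ max M (f 0) := le_max_right _ _
  rcases eq_or_lt_of_le (dist_nonneg : 0 ≤ dist (c p) (c q)) with hd0 | hdpos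
  · have h := hf p q hp hpq hqL
    rw [← hd0] at h ⊢
    simp only [mul_zero, zero_add] at h ⊢
    linarith
  -- main case
  · set x := c p with hx
    set y := c q with hy
    set d : ℝ := dist x y with hd
    obtain ⟨g, hg0, hgd, hgiso⟩ := hgeo x y
    have hdpos' : 0 < d := hdpos
    set S : Set X := c '' Set.Icc p q with hS
    have hSne : S.Nonempty := ⟨x, p, ⟨le_rfl, hpq⟩, rfl⟩
    have hIccL : Set.Icc p q ⊆ Set.Icc 0 L := Set.Icc_subset_Icc hp hqL
    have hclip : LipschitzOnWith 1 c (Set.Icc 0 L) := by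
      apply LipschitzOnWith.of_dist_le_mul
      intro a ha b hb
      have h := hlip a ha b hb
      simpa [Real.dist_eq] using h
    have hScompact : IsCompact S :=
      isCompact_Icc.image_of_continuousOn (hclip.continuousOn.mono hIccL)
    have hglip : LipschitzOnWith 1 g (Set.Icc 0 d) := by
      apply LipschitzOnWith.of_dist_le_mul
      intro a ha b hb
      have h := hgiso a ha b hb
      simp [Real.dist_eq, h]
    set F : ℝ → ℝ := fun u => Metric.infDist (g u) S with hF
    have hFcont : ContinuousOn F (Set.Icc 0 d) :=
      (Metric.continuous_infDist_pt S).comp_continuousOn hglip.continuousOn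
    obtain ⟨u₀, hu₀mem, hu₀max⟩ :=
      isCompact_Icc.exists_isMaxOn ⟨0, Set.mem_Icc.mpr ⟨le_rfl, hdpos.le⟩⟩ hFcont
    set D : ℝ := F u₀ with hDdef
    have hu₀1 : 0 ≤ u₀ := hu₀mem.1
    have hu₀2 : u₀ ≤ d := hu₀mem.2
    have hDge : ∀ r : ℝ, p ≤ r → r ≤ q → D ≤ dist (g u₀) (c r) := by
      intro r h1 h2
      exact Metric.infDist_le_dist_of_mem ⟨r, ⟨h1, h2⟩, rfl⟩
    have hD0 : 0 ≤ D := Metric.infDist_nonneg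
    have hFmax : ∀ u : ℝ, 0 ≤ u → u ≤ d → F u ≤ D := by
      intro u h1 h2
      exact hu₀max ⟨h1, h2⟩
    have hnear : ∀ u : ℝ, 0 ≤ u → u ≤ d → ∃ s : ℝ, p ≤ s ∧ s ≤ q ∧ dist (g u) (c s) = F u := by
      intro u h1 h2
      obtain ⟨z, hz, hz'⟩ := hScompact.exists_infDist_eq_dist hSne (g u)
      obtain ⟨s, hs, rfl⟩ := hz
      exact ⟨s, hs.1, hs.2, hz'.symm⟩
    have hdistg : ∀ u v : ℝ, 0 ≤ u → u ≤ v → v ≤ d → dist (g u) (g v) = v - u := by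
      intro u v h1 h2 h3
      rw [hgiso u ⟨h1, h2.trans h3⟩ v ⟨h1.trans h2, h3⟩, abs_of_nonpos (by linarith)]
      ring
    have hkey : D ≤ D₀ := by
      set a' := max 0 (u₀ - 2*D) with ha'def
      set b' := min d (u₀ + 2*D) with hb'def
      have ha'0 : 0 ≤ a' := le_max_left _ _
      have ha'u : a' ≤ u₀ := max_le hu₀1 (by linarith)
      have hub' : u₀ ≤ b' := le_min hu₀2 (by linarith)
      have hb'd : b' ≤ d := min_le_left _ _
      have ha'lb : u₀ - 2*D ≤ a' := le_max_right _ _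
      have hb'ub : b' ≤ u₀ + 2*D := min_le_right _ _
      have hs : ∃ s, p ≤ s ∧ s ≤ q ∧ dist (g a') (c s) ≤ D ∧
          2*D ≤ dist (g u₀) (g a') + dist (g u₀) (c s) - dist (g a') (c s) := by
        rcases le_or_gt (u₀ - 2*D) 0 with h | h
        · have ha0 : a' = 0 := max_eq_left h
          have e : dist x (c p) = 0 := by rw [hx, dist_self]
          refine ⟨p, le_rfl, hpq, ?_, ?_⟩
          · rw [ha0, hg0, e]; exact hD0
          · rw [ha0, hg0, e]
            have h1 := hDge p le_rfl hpq
            have e2 : dist (g u₀) x = dist (g u₀) (c p) := by rw [hx]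
            linarith only [h1, e2]
        · have ha' : a' = u₀ - 2*D := max_eq_right h.le
          have ha'd : a' ≤ d := ha'u.trans hu₀2
          have ha'0' : 0 ≤ a' := ha'0
          obtain ⟨s, hs1, hs2, hs3⟩ := hnear a' ha'0' ha'd
          have hFa : F a' ≤ D := hFmax a' ha'0' ha'd
          have hd1 : dist (g u₀) (g a') = 2*D := by
            rw [dist_comm, hdistg a' u₀ ha'0' ha'u hu₀2, ha']; ring
          have hge := hDge s hs1 hs2
          have hsd : dist (g a') (c s) ≤ D := by rw [hs3]; exact hFa
          exact ⟨s, hs1, hs2, hsd, by rw [hd1]; linarith only [hge, hsd]⟩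
      have ht : ∃ t, p ≤ t ∧ t ≤ q ∧ dist (g b') (c t) ≤ D ∧
          2*D ≤ dist (g u₀) (c t) + dist (g u₀) (g b') - dist (c t) (g b') := by
        rcases le_or_gt d (u₀ + 2*D) with h | h
        · have hb0 : b' = d := min_eq_left h
          have hgdy : g d = y := by rw [hd]; exact hgd
          have e : dist y (c q) = 0 := by rw [hy, dist_self]
          refine ⟨q, hpq, le_rfl, ?_, ?_⟩
          · rw [hb0, hgdy, e]; exact hD0
          · rw [hb0, hgdy]
            have h1 := hDge q hpq le_rfl
            have e2 : dist (g u₀) y = dist (g u₀) (c q) := by rw [hy]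
            rw [dist_comm (c q) y, e]
            linarith only [h1, e2]
        · have hb'' : b' = u₀ + 2*D := min_eq_right h.le
          have hb'0 : 0 ≤ b' := hu₀1.trans hub'
          obtain ⟨t, ht1, ht2, ht3⟩ := hnear b' hb'0 hb'd
          have hFb : F b' ≤ D := hFmax b' hb'0 hb'd
          have hd1 : dist (g u₀) (g b') = 2*D := by
            rw [hdistg u₀ b' hu₀1 hub' hb'd, hb'']; ring
          have hge := hDge t ht1 ht2
          have htd : dist (g b') (c t) ≤ D := by rw [ht3]; exact hFb
          refine ⟨t, ht1, ht2, htd, ?_⟩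
          rw [hd1, dist_comm (c t) (g b')]
          linarith only [hge, htd]
      obtain ⟨s, hsp, hsq, hsD, hsG⟩ := hs
      obtain ⟨t, htp, htq, htD, htG⟩ := ht
      have hGmid : ∀ n : ℕ, 2*D - 2*n*δ' - |t - s|/2^n
          ≤ dist (g u₀) (c s) + dist (g u₀) (c t) - dist (c s) (c t) := by
        intro n
        rcases le_total s t with hst | hst
        · have hch := chain_lemma hgp (g u₀) c D n s t hst
            (fun s' t' h1 h2 h3 => by
              have hh := hlip s' (hIccL ⟨hsp.trans h1, ((h2.trans h3).trans htq)⟩)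
                t' (hIccL ⟨hsp.trans (h1.trans h2), h3.trans htq⟩)
              rw [abs_of_nonpos (by linarith only [h2])] at hh
              linarith only [hh])
            (fun r h1 h2 => hDge r (hsp.trans h1) (h2.trans htq))
          rw [abs_of_nonneg (by linarith : (0:ℝ) ≤ t - s)]
          exact hch
        · have hch := chain_lemma hgp (g u₀) c D n t s hst
            (fun s' t' h1 h2 h3 => by
              have hh := hlip s' (hIccL ⟨htp.trans h1, ((h2.trans h3).trans hsq)⟩)
                t' (hIccL ⟨htp.trans (h1.trans h2), h3.trans hsq⟩)
              rw [abs_of_nonpos (by linarith only [h2])] at hh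
              linarith only [hh])
            (fun r h1 h2 => hDge r (htp.trans h1) (h2.trans hsq))
          rw [abs_of_nonpos (by linarith only [hst] : t - s ≤ 0), neg_sub]
          have e := dist_comm (c s) (c t)
          linarith only [hch, e]
      have hb'a' : dist (g a') (g b') = b' - a' := hdistg a' b' ha'0 (ha'u.trans hub') hb'd
      have hst6 : dist (c s) (c t) ≤ 6*D := by
        have h1 := dist_triangle4 (c s) (g a') (g b') (c t)
        have h2 : dist (g b') (c t) ≤ D := htD
        have h4 := dist_comm (c s) (g a')
        rw [hb'a'] at h1
        linarith only [h1, h2, h4, hsD, ha'lb, hb'ub]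
      have habs : |t - s| ≤ f (6*D) * (6*D) + f (6*D) := by
        have hf6 : f (dist (c s) (c t)) ≤ f (6*D) := hmono hst6
        have hmul : f (dist (c s) (c t)) * dist (c s) (c t) ≤ f (6*D) * (6*D) :=
          mul_le_mul hf6 hst6 dist_nonneg (hpos _)
        rcases le_total s t with hst | hst
        · have h := hf s t (hp.trans hsp) hst (htq.trans hqL)
          rw [abs_of_nonneg (by linarith only [hst] : (0:ℝ) ≤ t - s)]
          linarith only [h, hmul, hf6]
        · have h := hf t s (hp.trans htp) hst (hsq.trans hqL)
          rw [dist_comm (c t) (c s)] at h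
          rw [abs_of_nonpos (by linarith only [hst] : t - s ≤ 0)]
          linarith only [h, hmul, hf6]
      have hA0 : (0:ℝ) < A := lt_of_lt_of_le one_pos hA1
      set Λ : ℝ := A * Real.exp (ε*(6*D)) * (6*D+1) with hΛdef
      have hΛ0 : 0 < Λ := by
        rw [hΛdef]
        exact mul_pos (mul_pos hA0 (Real.exp_pos _)) (by linarith)
      have hΔΛ : |t - s| ≤ Λ := by
        have hB := hfA (6*D) (by linarith)
        have h2 : f (6*D) * (6*D+1) ≤ A * Real.exp (ε*(6*D)) * (6*D+1) :=
          mul_le_mul_of_nonneg_right hB (by linarith)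
        have e : f (6*D) * (6*D) + f (6*D) = f (6*D) * (6*D+1) := by ring
        rw [hΛdef]; linarith only [habs, h2, e]
      have hDn : ∀ n : ℕ, 2*D ≤ (2*n+4)*δ' + Λ/2^n := by
        intro n
        have hpow : (0:ℝ) < 2^n := by positivity
        have h1 := hGmid n
        have e0 : dist (g u₀) (g a') + dist (g u₀) (g b') - dist (g a') (g b') = 0 := by
          rw [dist_comm (g u₀) (g a'), hdistg a' u₀ ha'0 ha'u hu₀2,
            hdistg u₀ b' hu₀1 hub' hb'd, hb'a']
          ring
        have hg1 := hgp (g a') (c s) (g b') (g u₀)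
        have hg2 := hgp (c s) (c t) (g b') (g u₀)
        have hnn : (0:ℝ) ≤ 2*(n:ℝ)*δ' := by positivity
        have habs0 : (0:ℝ) ≤ |t-s|/2^n := by positivity
        have hmin2 : 2*D - 2*(n:ℝ)*δ' - |t-s|/2^n
            ≤ min (dist (g u₀) (c s) + dist (g u₀) (c t) - dist (c s) (c t))
                  (dist (g u₀) (c t) + dist (g u₀) (g b') - dist (c t) (g b')) :=
          le_min h1 (by linarith only [htG, hnn, habs0])
        have h2 : 2*D - 2*(n:ℝ)*δ' - |t-s|/2^n - 2*δ'
            ≤ dist (g u₀) (c s) + dist (g u₀) (g b') - dist (c s) (g b') := by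
          linarith only [hg2, hmin2, hδ'0.le]
        have hmin1 : 2*D - 2*(n:ℝ)*δ' - |t-s|/2^n - 2*δ'
            ≤ min (dist (g u₀) (g a') + dist (g u₀) (c s) - dist (g a') (c s))
                  (dist (g u₀) (c s) + dist (g u₀) (g b') - dist (c s) (g b')) :=
          le_min (by linarith only [hsG, hnn, habs0, hδ'0.le]) h2
        have hdiv : |t-s|/2^n ≤ Λ/2^n := (div_le_div_iff_of_pos_right hpow).mpr hΔΛ
        linarith only [hg1, hmin1, e0, hdiv]
      set n : ℕ := ⌈Real.logb 2 (Λ+1)⌉₊ with hndef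
      have hlogb0 : 0 ≤ Real.logb 2 (Λ+1) := Real.logb_nonneg one_lt_two (by linarith only [hΛ0])
      have h2n : Λ + 1 ≤ 2^n := by
        have h1 : Real.logb 2 (Λ+1) ≤ (n:ℝ) := Nat.le_ceil _
        have h2 : ((2:ℝ))^(Real.logb 2 (Λ+1)) ≤ (2:ℝ)^((n:ℝ):ℝ) :=
          Real.rpow_le_rpow_of_exponent_le one_le_two h1
        rw [Real.rpow_logb two_pos (by norm_num) (by linarith only [hΛ0]), Real.rpow_natCast] at h2
        exact h2
      have hpow : (0:ℝ) < 2^n := by positivity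
      have hΛn : Λ/2^n ≤ 1 := by rw [div_le_one hpow]; linarith only [h2n]
      have hn1 : (n:ℝ) ≤ Real.logb 2 (Λ+1) + 1 := (Nat.ceil_lt_add_one hlogb0).le
      have hD2 := hDn n
      have hΛC : Λ + 1 ≤ C₁ * Real.exp (7*(ε*D)) := by
        have hexp1 : (1:ℝ) ≤ Real.exp (ε*(6*D)) := Real.one_le_exp
          (mul_nonneg hε.le (by linarith only [hD0]))
        have hAe : (1:ℝ) ≤ A * Real.exp (ε*(6*D)) := by
          have := mul_le_mul hA1 hexp1 zero_le_one hA0.le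
          linarith only [this]
        have h2 : Λ + 1 ≤ A * Real.exp (ε*(6*D)) * (6*D+2) := by
          have e : A * Real.exp (ε*(6*D)) * (6*D+2) - A * Real.exp (ε*(6*D)) * (6*D+1)
              = A * Real.exp (ε*(6*D)) := by ring
          rw [hΛdef]; linarith only [hAe, e]
        have hmul : Real.exp (ε*(6*D)) * Real.exp (ε*D) = Real.exp (7*(ε*D)) := by
          rw [← Real.exp_add]; ring_nf
        have h4 : (D+1)*ε ≤ Real.exp ε * Real.exp (ε*D) := by
          have h5 := Real.add_one_le_exp (ε*(D+1))
          have h6 : Real.exp (ε*(D+1)) = Real.exp ε * Real.exp (ε*D) := by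
            rw [← Real.exp_add]; ring_nf
          linarith only [h5, h6]
        have h3 : 6*D+2 ≤ 8*(Real.exp ε * Real.exp (ε*D))/ε := by
          rw [le_div_iff₀ hε]
          have hDε : 0 ≤ D*ε := mul_nonneg hD0 hε.le
          linarith only [h4, hDε, hε.le]
        calc Λ + 1 ≤ A * Real.exp (ε*(6*D)) * (6*D+2) := h2
          _ ≤ A * Real.exp (ε*(6*D)) * (8*(Real.exp ε * Real.exp (ε*D))/ε) :=
              mul_le_mul_of_nonneg_left h3 (le_of_lt (mul_pos hA0 (Real.exp_pos _)))
          _ = (8*A*Real.exp ε/ε) * (Real.exp (ε*(6*D)) * Real.exp (ε*D)) := by ring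
          _ = C₁ * Real.exp (7*(ε*D)) := by rw [hmul, ← hC₁def]
      have hlogΛ : Real.log (Λ+1) ≤ Real.log C₁ + 7*(ε*D) := by
        have h1 : Real.log (Λ+1) ≤ Real.log (C₁ * Real.exp (7*(ε*D))) :=
          Real.log_le_log (by linarith only [hΛ0]) hΛC
        rwa [Real.log_mul (ne_of_gt hC₁0) (Real.exp_ne_zero _), Real.log_exp] at h1
      have hlogbΛ : Real.logb 2 (Λ+1) ≤ (Real.log C₁ + 7*(ε*D))/Real.log 2 := by
        rw [Real.logb]
        exact (div_le_div_iff_of_pos_right hlog2).mpr hlogΛ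
      have hfin : 2*D ≤ (2*((Real.log C₁ + 7*(ε*D))/Real.log 2 + 1) + 4)*δ' + 1 := by
        have e1 : (2*(n:ℝ)+4)*δ' ≤ (2*((Real.log C₁ + 7*(ε*D))/Real.log 2 + 1)+4)*δ' := by
          have hX : (n:ℝ) ≤ (Real.log C₁ + 7*(ε*D))/Real.log 2 + 1 := hn1.trans
            (by linarith only [hlogbΛ])
          exact mul_le_mul_of_nonneg_right (by linarith only [hX]) hδ'0.le
        linarith only [hD2, hΛn, e1]
      have hexpand : (2*((Real.log C₁ + 7*(ε*D))/Real.log 2 + 1) + 4)*δ' + 1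
          = 2*(δ'*Real.log C₁/Real.log 2) + 7*D/4 + 6*δ' + 1 := by
        rw [hεdef]
        field_simp
        ring
      rw [hexpand] at hfin
      rw [hD₀def]
      have ebr : 8*δ'*Real.log C₁/Real.log 2 = 4*(2*(δ'*Real.log C₁/Real.log 2)) := by ring
      linarith only [hfin, ebr]
    -- PARTITION STEP
    have hgdy : g d = y := by rw [hd]; exact hgd
    set N : ℕ := ⌈d⌉₊ with hNdef
    have hNpos : 0 < N := Nat.ceil_pos.mpr hdpos
    have hN0 : (0:ℝ) < N := by exact_mod_cast hNpos
    have hdN1 : d/N ≤ 1 := by rw [div_le_one hN0]; exact Nat.le_ceil d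
    have hdN0 : 0 ≤ d/N := div_nonneg hdpos.le hN0.le
    have hNd : (N:ℝ) * (d/N) = d := by field_simp
    have hsel : ∀ j : ℕ, ∃ tj : ℝ, (p ≤ tj ∧ tj ≤ q) ∧
        (j ≤ N → dist (g ((j:ℝ)*(d/N))) (c tj) ≤ D₀) ∧
        (j = 0 → tj = p) ∧ (N ≤ j → tj = q) := by
      intro j
      rcases Nat.lt_or_ge j N with hj | hj
      · rcases Nat.eq_zero_or_pos j with rfl | hjpos
        · refine ⟨p, ⟨le_rfl, hpq⟩, ?_, fun _ => rfl, fun h => absurd h (by omega)⟩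
          intro _
          have e : dist x (c p) = 0 := by rw [hx, dist_self]
          simp only [Nat.cast_zero, zero_mul, hg0, e]
          exact hD₀0
        · have hu1 : 0 ≤ (j:ℝ)*(d/N) := by positivity
          have hu2 : (j:ℝ)*(d/N) ≤ d := by
            have hjN : (j:ℝ) ≤ (N:ℝ) := by exact_mod_cast hj.le
            calc (j:ℝ)*(d/N) ≤ (N:ℝ)*(d/N) := mul_le_mul_of_nonneg_right hjN hdN0
              _ = d := hNd
          obtain ⟨s, h1, h2, h3⟩ := hnear _ hu1 hu2
          refine ⟨s, ⟨h1, h2⟩, fun _ => ?_, fun h => absurd h (by omega),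
            fun h => absurd h (by omega)⟩
          rw [h3]
          exact (hFmax _ hu1 hu2).trans hkey
      · refine ⟨q, ⟨hpq, le_rfl⟩, ?_, fun h => absurd h (by omega), fun _ => rfl⟩
        intro hjN
        have hjN' : j = N := le_antisymm hjN hj
        have e : dist y (c q) = 0 := by rw [hy, dist_self]
        rw [hjN', hNd, hgdy, e]
        exact hD₀0
    choose t ht1 ht2 ht3 ht4 using hsel
    have htel : q - p = ∑ j ∈ Finset.range N, (t (j+1) - t j) := by
      rw [Finset.sum_range_sub]
      rw [ht3 0 rfl, ht4 N le_rfl]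
    have hstep : ∀ j : ℕ, j < N → |t (j+1) - t j| ≤ M := by
      intro j hj
      have hj1 : j + 1 ≤ N := hj
      have hu1j : 0 ≤ (j:ℝ)*(d/N) := by positivity
      have hjN : (j:ℝ) + 1 ≤ (N:ℝ) := by exact_mod_cast hj1
      have hu2j : ((j:ℝ)+1)*(d/N) ≤ d := by
        calc ((j:ℝ)+1)*(d/N) ≤ (N:ℝ)*(d/N) := mul_le_mul_of_nonneg_right hjN hdN0
          _ = d := hNd
      have hcast : ((j+1 : ℕ) : ℝ) = (j:ℝ) + 1 := by push_cast; ring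
      have hmid : dist (g ((j:ℝ)*(d/N))) (g (((j:ℝ)+1)*(d/N))) = d/N := by
        rw [hdistg _ _ hu1j (by nlinarith only [hdN0]) hu2j]
        ring
      have hd1 := ht2 j hj.le
      have hd2 := ht2 (j+1) hj1
      rw [hcast] at hd2
      have hdd : dist (c (t j)) (c (t (j+1))) ≤ 2*D₀+1 := by
        have htri := dist_triangle4 (c (t j)) (g ((j:ℝ)*(d/N)))
          (g (((j:ℝ)+1)*(d/N))) (c (t (j+1)))
        have hc1 : dist (c (t j)) (g ((j:ℝ)*(d/N))) = dist (g ((j:ℝ)*(d/N))) (c (t j)) :=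
          dist_comm _ _
        rw [hc1, hmid] at htri
        have hfin3 : dist (c (t j)) (c (t (j+1))) ≤ D₀ + d/(N:ℝ) + D₀ :=
          le_trans htri (add_le_add (add_le_add hd1 le_rfl) hd2)
        refine hfin3.trans (le_trans (add_le_add (add_le_add le_rfl hdN1) le_rfl) ?_)
        exact le_of_eq (by ring)
      have hfd : f (dist (c (t j)) (c (t (j+1)))) ≤ f (2*D₀+1) := hmono hdd
      rcases le_total (t j) (t (j+1)) with hle | hle
      · have h := hf (t j) (t (j+1)) (hp.trans (ht1 j).1) hle ((ht1 (j+1)).2.trans hqL)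
        rw [abs_of_nonneg (by linarith only [hle] : (0:ℝ) ≤ t (j+1) - t j)]
        have hm2 : f (dist (c (t j)) (c (t (j+1)))) * dist (c (t j)) (c (t (j+1)))
            ≤ f (2*D₀+1)*(2*D₀+1) := mul_le_mul hfd hdd dist_nonneg (hpos _)
        rw [hMdef]
        linarith only [h, hm2, hfd]
      · have h := hf (t (j+1)) (t j) (hp.trans (ht1 (j+1)).1) hle ((ht1 j).2.trans hqL)
        rw [dist_comm (c (t (j+1))) (c (t j))] at h
        rw [abs_of_nonpos (by linarith only [hle] : t (j+1) - t j ≤ 0)]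
        have hm2 : f (dist (c (t j)) (c (t (j+1)))) * dist (c (t j)) (c (t (j+1)))
            ≤ f (2*D₀+1)*(2*D₀+1) := mul_le_mul hfd hdd dist_nonneg (hpos _)
        rw [hMdef]
        linarith only [h, hm2, hfd]
    have hsum : q - p ≤ (N:ℝ) * M := by
      rw [htel]
      calc ∑ j ∈ Finset.range N, (t (j+1) - t j) ≤ ∑ _j ∈ Finset.range N, M :=
            Finset.sum_le_sum (fun j hj =>
              le_trans (le_abs_self _) (hstep j (Finset.mem_range.mp hj)))
        _ = (N:ℝ) * M := by rw [Finset.sum_const, Finset.card_range, nsmul_eq_mul]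
    have hNle : (N:ℝ) ≤ d + 1 := (Nat.ceil_lt_add_one hdpos.le).le
    have hfin2 : q - p ≤ (d+1)*M := hsum.trans (mul_le_mul_of_nonneg_right hNle hM0)
    have hMd : M*d ≤ (max M (f 0))*d := mul_le_mul_of_nonneg_right hKM hdpos.le
    linarith only [hfin2, hMd, hKM, hM0, hdpos.le]
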